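/- Let ψ : ℝ^d → [0,1] be continuous, equal to 1 on the closed ball of radius 1 and supported in the closed ball of radius 2. Define F : [0,1] × ℝ^n → ℝ^n (with ℝ^n = ℝ^d × ℝ^{n−d}) by F(t,(u,v)) = (u, (H_{tψ(u)}(|v|)/|v|)·v) for v ≠ 0 and F(t,(u,0)) = (u,0), where H is the piecewise-linear homotopy satisfying H_t(s) ≤ s. Then F is continuous, F(0,·) is the identity, F(1,·) maps B(0,1) × B(0,1/2) into ℝ^d × {0}, and F(t,(u,v)) = (u,v) whenever |u| > 2 or |v| > 1. -/
import Mathlib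


open scoped Classical

/-- Properties of the pinch `F(t,(u,v)) = (u, (H_{tψ(u)}(|v|)/|v|)·v)`:
it is continuous, `F 0 = id`, `F 1` maps `B(0,1) × B(0,1/2)` into `ℝ^d × 0`,
and `F t` fixes `(u,v)` whenever `|u| > 2` or `|v| > 1`. -/
theorem pinch_properties {d m : ℕ}
    (ψ : EuclideanSpace ℝ (Fin d) → ℝ) (hψc : Continuous ψ)
    (hψ01 : ∀ u, ψ u ∈ Set.Icc (0 : ℝ) 1)
    (hψone : ∀ u ∈ Metric.closedBall (0 : EuclideanSpace ℝ (Fin d)) 1, ψ u = 1)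
    (hψsupp : Function.support ψ ⊆ Metric.closedBall (0 : EuclideanSpace ℝ (Fin d)) 2)
    (H : ℝ → ℝ → ℝ)
    (hHc : ContinuousOn (fun p : ℝ × ℝ => H p.1 p.2) (Set.Icc 0 1 ×ˢ Set.Ici 0))
    (hHfix : ∀ t ∈ Set.Icc (0 : ℝ) 1, ∀ s : ℝ, 1 ≤ s → H t s = s)
    (hH0 : ∀ s ∈ Set.Ici (0 : ℝ), H 0 s = s)
    (hH1 : ∀ s ∈ Set.Icc (0 : ℝ) (1 / 2), H 1 s = 0)
    (hHle : ∀ t ∈ Set.Icc (0 : ℝ) 1, ∀ s ∈ Set.Ici (0 : ℝ), H t s ≤ s)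
    (hHsmall : ∀ t ∈ Set.Icc (0 : ℝ) 1, ∀ s : ℝ, 0 ≤ s → s < (1 - t) / 4 → H t s = s)
    (F : ℝ → EuclideanSpace ℝ (Fin d) × EuclideanSpace ℝ (Fin m) →
      EuclideanSpace ℝ (Fin d) × EuclideanSpace ℝ (Fin m))
    (hF : ∀ t u v, F t (u, v) =
      (u, if v = 0 then 0 else (H (t * ψ u) ‖v‖ / ‖v‖) • v)) :
    ContinuousOn (fun p : ℝ × (EuclideanSpace ℝ (Fin d) × EuclideanSpace ℝ (Fin m)) =>
        F p.1 p.2) (Set.Icc 0 1 ×ˢ Set.univ) ∧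
    (∀ x, F 0 x = x) ∧
    (∀ u ∈ Metric.ball (0 : EuclideanSpace ℝ (Fin d)) 1,
      ∀ v ∈ Metric.ball (0 : EuclideanSpace ℝ (Fin m)) (1 / 2), (F 1 (u, v)).2 = 0) ∧
    (∀ t ∈ Set.Icc (0 : ℝ) 1, ∀ u v, (2 < ‖u‖ ∨ 1 < ‖v‖) → F t (u, v) = (u, v)) := by
  -- H t 0 = 0 for t ∈ [0,1]
  have hH00 : ∀ t ∈ Set.Icc (0:ℝ) 1, H t 0 = 0 := by
    intro t ht
    rcases eq_or_lt_of_le ht.2 with h1 | h1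
    · rw [h1]; exact hH1 0 ⟨le_rfl, by norm_num⟩
    · exact hHsmall t ht 0 le_rfl (by linarith)
  have hmem : ∀ t ∈ Set.Icc (0:ℝ) 1, ∀ u, t * ψ u ∈ Set.Icc (0:ℝ) 1 := by
    intro t ht u
    obtain ⟨h0, h1⟩ := hψ01 u
    exact ⟨mul_nonneg ht.1 h0, mul_le_one₀ ht.2 h0 h1⟩
  set S : Set (ℝ × (EuclideanSpace ℝ (Fin d) × EuclideanSpace ℝ (Fin m))) :=
    Set.Icc 0 1 ×ˢ Set.univ with hS
  set G : ℝ × (EuclideanSpace ℝ (Fin d) × EuclideanSpace ℝ (Fin m)) →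
      EuclideanSpace ℝ (Fin m) := fun p =>
    if p.2.2 = 0 then 0 else (H (p.1 * ψ p.2.1) ‖p.2.2‖ / ‖p.2.2‖) • p.2.2 with hG
  have hFeq : (fun p : ℝ × (EuclideanSpace ℝ (Fin d) × EuclideanSpace ℝ (Fin m)) =>
      F p.1 p.2) = fun p => (p.2.1, G p) := by
    funext p
    obtain ⟨t, u, v⟩ := p
    rw [hF]
  refine ⟨?_, ?_, ?_, ?_⟩
  · rw [hFeq]
    refine ContinuousOn.prodMk (Continuous.continuousOn (by fun_prop)) ?_
    intro p hp
    obtain ⟨t₀, u₀, v₀⟩ := p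
    have ht₀ : t₀ ∈ Set.Icc (0:ℝ) 1 := hp.1
    -- inner map to domain of H
    have hinner : Continuous (fun p : ℝ × (EuclideanSpace ℝ (Fin d) × EuclideanSpace ℝ (Fin m)) =>
        (p.1 * ψ p.2.1, ‖p.2.2‖)) := by fun_prop
    have hmaps : Set.MapsTo (fun p : ℝ × (EuclideanSpace ℝ (Fin d) × EuclideanSpace ℝ (Fin m)) =>
        (p.1 * ψ p.2.1, ‖p.2.2‖)) S (Set.Icc 0 1 ×ˢ Set.Ici 0) := by
      intro q hq
      exact ⟨hmem q.1 hq.1 q.2.1, norm_nonneg _⟩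
    have hφ : ContinuousWithinAt (fun p : ℝ × (EuclideanSpace ℝ (Fin d) × EuclideanSpace ℝ (Fin m)) =>
        H (p.1 * ψ p.2.1) ‖p.2.2‖) S (t₀, u₀, v₀) := by
      exact (hHc.comp hinner.continuousOn hmaps) _ hp
    by_cases hv : v₀ = 0
    · -- continuity at v = 0 via norms
      subst hv
      have hval : G (t₀, u₀, 0) = 0 := by simp [hG]
      rw [ContinuousWithinAt, hval]
      rw [tendsto_zero_iff_norm_tendsto_zero]
      have hnorm : ∀ q ∈ S, ‖G q‖ = |H (q.1 * ψ q.2.1) ‖q.2.2‖| := by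
        intro q hq
        by_cases h : q.2.2 = 0
        · simp [hG, h, hH00 _ (hmem q.1 hq.1 q.2.1)]
        · have hn : ‖q.2.2‖ ≠ 0 := norm_ne_zero_iff.2 h
          have hq2 : G q = (H (q.1 * ψ q.2.1) ‖q.2.2‖ / ‖q.2.2‖) • q.2.2 := if_neg h
          rw [hq2, norm_smul, Real.norm_eq_abs, abs_div, abs_norm, div_mul_cancel₀ _ hn]
      have hlim : Filter.Tendsto (fun q : ℝ × (EuclideanSpace ℝ (Fin d) × EuclideanSpace ℝ (Fin m)) =>
          |H (q.1 * ψ q.2.1) ‖q.2.2‖|) (nhdsWithin (t₀, u₀, 0) S) (nhds 0) := by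
        have : |H (t₀ * ψ u₀) ‖(0 : EuclideanSpace ℝ (Fin m))‖| = 0 := by
          simp [hH00 _ (hmem t₀ ht₀ u₀)]
        have := (hφ.abs)
        rw [ContinuousWithinAt] at this
        simpa [hH00 _ (hmem t₀ ht₀ u₀)] using this.abs
      refine hlim.congr' ?_
      filter_upwards [self_mem_nhdsWithin] with q hq
      exact (hnorm q hq).symm
    · -- v₀ ≠ 0
      have hopen : IsOpen {q : ℝ × (EuclideanSpace ℝ (Fin d) × EuclideanSpace ℝ (Fin m)) |
          q.2.2 ≠ 0} := isOpen_ne.preimage (by fun_prop)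
      have hc2 : ContinuousWithinAt (fun q : ℝ × (EuclideanSpace ℝ (Fin d) × EuclideanSpace ℝ (Fin m)) =>
          (H (q.1 * ψ q.2.1) ‖q.2.2‖ / ‖q.2.2‖) • q.2.2) S (t₀, u₀, v₀) := by
        exact ((hφ.div (continuous_norm.comp (continuous_snd.comp continuous_snd)).continuousWithinAt
          (norm_ne_zero_iff.2 hv)).smul
          (continuous_snd.comp continuous_snd).continuousWithinAt)
      refine hc2.congr_of_eventuallyEq ?_ (by simp [hG, hv])
      have hmem' : {q : ℝ × (EuclideanSpace ℝ (Fin d) × EuclideanSpace ℝ (Fin m)) |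
          q.2.2 ≠ 0} ∈ nhdsWithin (t₀, u₀, v₀) S :=
        nhdsWithin_le_nhds (hopen.mem_nhds hv)
      filter_upwards [hmem'] with q hq
      simp [hG, hq]
  · intro x
    obtain ⟨u, v⟩ := x
    rw [hF]
    by_cases hv : v = 0
    · simp [hv]
    · have hn : ‖v‖ ≠ 0 := norm_ne_zero_iff.2 hv
      simp only [hv, if_neg, zero_mul]
      rw [hH0 ‖v‖ (norm_nonneg v), div_self hn, one_smul]
      simp [hv]
  · intro u hu v hv
    rw [hF]
    by_cases h : v = 0
    · simp [h]
    · have hψu : ψ u = 1 := hψone u (Metric.ball_subset_closedBall hu)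
      have : H (ψ u) ‖v‖ = 0 := by
        rw [hψu]
        exact hH1 ‖v‖ ⟨norm_nonneg v, le_of_lt (by simpa using hv)⟩
      simp [h, this]
  · intro t ht u v hcase
    rw [hF]
    by_cases h : v = 0
    · simp [h]
    · have hn : ‖v‖ ≠ 0 := norm_ne_zero_iff.2 h
      rcases hcase with h2 | h1
      · have hψu : ψ u = 0 := by
          by_contra hne
          have := hψsupp hne
          rw [Metric.mem_closedBall, dist_zero_right] at this
          linarith
        rw [hψu, mul_zero, hH0 ‖v‖ (norm_nonneg v)]
        simp [h, div_self hn]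
      · rw [hHfix _ (hmem t ht u) ‖v‖ (le_of_lt h1)]
        simp [h, div_self hn]
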